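/- Let ψ be a K-strongly convex regularizer on a compact convex subset Z of a normed Euclidean space (R^D, ‖·‖), with induced mirror map Φ and Fenchel coupling F. Then for every p ∈ Z and all y, y′ ∈ R^D: F(p, y′) ≤ F(p, y) + ⟨Φ(y) − p, y′ − y⟩ + (1/(2K))‖y′ − y‖_*². -/

import Mathlib

open scoped BigOperators

noncomputable section

/-- The standard duality pairing on `ℝ^D`. -/
def stdPair {D : ℕ} (x y : Fin D → ℝ) : ℝ := ∑ j, x j * y j

/-- A norm on `ℝ^D`, given as explicit data. -/
structure NormOn (D : ℕ) where
  toFun : (Fin D → ℝ) → ℝ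
  add_le' : ∀ x y, toFun (x + y) ≤ toFun x + toFun y
  smul' : ∀ (c : ℝ) (x : Fin D → ℝ), toFun (c • x) = |c| * toFun x
  eq_zero' : ∀ x, toFun x = 0 → x = 0

instance {D : ℕ} : CoeFun (NormOn D) (fun _ => (Fin D → ℝ) → ℝ) := ⟨NormOn.toFun⟩

/-- The dual norm `‖y‖_* = sup_{‖x‖ ≤ 1} ⟨x, y⟩` of a norm on `ℝ^D`. -/
def dualNorm {D : ℕ} (nrm : NormOn D) (y : Fin D → ℝ) : ℝ :=
  sSup ((fun x => stdPair x y) '' {x | nrm x ≤ 1})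

/-- The convex conjugate `ψ*(y) = max_{x ∈ Z} (⟨x, y⟩ − ψ(x))` of `ψ : Z → ℝ`. -/
def conjFn {D : ℕ} (Z : Set (Fin D → ℝ)) (ψ : (Fin D → ℝ) → ℝ) (y : Fin D → ℝ) : ℝ :=
  sSup ((fun x => stdPair x y - ψ x) '' Z)

/-- The Fenchel coupling `F(p, y) = ψ(p) + ψ*(y) − ⟨y, p⟩`. -/
def fenchelCoupling {D : ℕ} (Z : Set (Fin D → ℝ)) (ψ : (Fin D → ℝ) → ℝ)
    (p y : Fin D → ℝ) : ℝ :=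
  ψ p + conjFn Z ψ y - stdPair y p

lemma stdPair_comm {D : ℕ} (x y : Fin D → ℝ) : stdPair x y = stdPair y x := by
  simp [stdPair, mul_comm]

lemma stdPair_sub_left {D : ℕ} (a b y : Fin D → ℝ) :
    stdPair (a - b) y = stdPair a y - stdPair b y := by
  simp [stdPair, sub_mul, Finset.sum_sub_distrib]

lemma stdPair_sub_right {D : ℕ} (y a b : Fin D → ℝ) :
    stdPair y (a - b) = stdPair y a - stdPair y b := by
  simp [stdPair, mul_sub, Finset.sum_sub_distrib]

lemma stdPair_add_right {D : ℕ} (y a b : Fin D → ℝ) :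
    stdPair y (a + b) = stdPair y a + stdPair y b := by
  simp [stdPair, mul_add, Finset.sum_add_distrib]

lemma stdPair_smul_right {D : ℕ} (y : Fin D → ℝ) (c : ℝ) (a : Fin D → ℝ) :
    stdPair y (c • a) = c * stdPair y a := by
  simp only [stdPair, Pi.smul_apply, smul_eq_mul, Finset.mul_sum]
  exact Finset.sum_congr rfl fun j _ => by ring

lemma nrm_zero {D : ℕ} (nrm : NormOn D) : nrm 0 = 0 := by
  have := nrm.smul' 0 0
  simpa using this

lemma nrm_neg {D : ℕ} (nrm : NormOn D) (x : Fin D → ℝ) : nrm (-x) = nrm x := by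
  have := nrm.smul' (-1) x
  simpa using this

lemma nrm_nonneg {D : ℕ} (nrm : NormOn D) (x : Fin D → ℝ) : 0 ≤ nrm x := by
  have h := nrm.add_le' x (-x)
  rw [add_neg_cancel, nrm_zero, nrm_neg] at h
  linarith

lemma nrm_sub_le {D : ℕ} (nrm : NormOn D) (x y : Fin D → ℝ) :
    nrm x - nrm y ≤ nrm (x - y) := by
  have h := nrm.add_le' (x - y) y
  simp at h
  linarith

lemma nrm_lower {D : ℕ} (nrm : NormOn D) : ∃ c > 0, ∀ x, c * ‖x‖ ≤ nrm x := by
  -- nrm is continuous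
  set M : ℝ := ∑ j : Fin D, nrm (Pi.single j 1) with hM
  have hub : ∀ x : Fin D → ℝ, nrm x ≤ M * ‖x‖ := by
    intro x
    have hx : x = ∑ j : Fin D, x j • (Pi.single j (1:ℝ) : Fin D → ℝ) := by
      ext k; simp [Pi.single_apply]
    calc nrm x = nrm (∑ j : Fin D, x j • (Pi.single j (1:ℝ) : Fin D → ℝ)) := by rw [← hx]
      _ ≤ ∑ j : Fin D, nrm (x j • (Pi.single j (1:ℝ) : Fin D → ℝ)) := by
          classical
          refine Finset.le_sum_of_subadditive nrm.toFun (nrm_zero nrm).le nrm.add_le' _ _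
      _ = ∑ j : Fin D, |x j| * nrm ((Pi.single j (1:ℝ) : Fin D → ℝ)) := by
          simp [nrm.smul']
      _ ≤ ∑ j : Fin D, ‖x‖ * nrm ((Pi.single j (1:ℝ) : Fin D → ℝ)) := by
          apply Finset.sum_le_sum
          intro j _
          have h1 : |x j| ≤ ‖x‖ := by
            simpa using norm_le_pi_norm x j
          exact mul_le_mul_of_nonneg_right h1 (nrm_nonneg nrm _)
      _ = M * ‖x‖ := by rw [← Finset.mul_sum, mul_comm]
  have hMnn : 0 ≤ M := Finset.sum_nonneg fun j _ => nrm_nonneg nrm _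
  have hcont : Continuous nrm.toFun := by
    apply LipschitzWith.continuous (K := Real.toNNReal M)
    apply LipschitzWith.of_dist_le_mul
    intro a b
    have h1 : nrm a - nrm b ≤ nrm (a - b) := nrm_sub_le nrm a b
    have h2 : nrm b - nrm a ≤ nrm (a - b) := by
      have := nrm_sub_le nrm b a
      rwa [← nrm_neg nrm (b - a), neg_sub] at this
    have h3 : nrm (a - b) ≤ M * ‖a - b‖ := hub _
    rw [Real.dist_eq, dist_eq_norm]
    rw [abs_sub_le_iff]
    constructor <;> [skip; skip] <;>
      calc _ ≤ nrm (a - b) := by assumption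
        _ ≤ M * ‖a - b‖ := h3
        _ ≤ (Real.toNNReal M : ℝ) * ‖a - b‖ := by
            apply mul_le_mul_of_nonneg_right _ (norm_nonneg _)
            exact Real.le_coe_toNNReal M
  by_cases hD : Nonempty (Fin D)
  · have hsph : IsCompact (Metric.sphere (0 : Fin D → ℝ) 1) := isCompact_sphere 0 1
    have hne : (Metric.sphere (0 : Fin D → ℝ) 1).Nonempty := by
      exact NormedSpace.sphere_nonempty.2 zero_le_one
    obtain ⟨z, hz, hmin⟩ := hsph.exists_isMinOn hne hcont.continuousOn
    have hz1 : ‖z‖ = 1 := by simpa using hz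
    have hzne : z ≠ 0 := by intro h; rw [h] at hz1; simp at hz1
    have hc : 0 < nrm z := by
      rcases lt_or_eq_of_le (nrm_nonneg nrm z) with h | h
      · exact h
      · exact absurd (nrm.eq_zero' z h.symm) hzne
    refine ⟨nrm z, hc, fun x => ?_⟩
    by_cases hx0 : x = 0
    · simp [hx0, nrm_zero]
    · have hxn : ‖x‖ ≠ 0 := norm_ne_zero_iff.2 hx0
      have hmem : ‖x‖⁻¹ • x ∈ Metric.sphere (0 : Fin D → ℝ) 1 := by
        simp [norm_smul, abs_of_nonneg (inv_nonneg.2 (norm_nonneg x)),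
          inv_mul_cancel₀ hxn]
      have hge : nrm z ≤ nrm (‖x‖⁻¹ • x) := hmin hmem
      have heq : nrm (‖x‖⁻¹ • x) = ‖x‖⁻¹ * nrm x := by
        rw [nrm.smul', abs_of_nonneg (inv_nonneg.2 (norm_nonneg x))]
      rw [heq] at hge
      have hxp : 0 < ‖x‖ := lt_of_le_of_ne (norm_nonneg x) (Ne.symm hxn)
      calc nrm z * ‖x‖ ≤ (‖x‖⁻¹ * nrm x) * ‖x‖ :=
            mul_le_mul_of_nonneg_right hge (norm_nonneg x)
        _ = nrm x := by field_simp
  · refine ⟨1, one_pos, fun x => ?_⟩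
    have hx0 : x = 0 := by ext j; exact absurd ⟨j⟩ hD
    simp [hx0, nrm_zero]

lemma stdPair_le_dualNorm {D : ℕ} (nrm : NormOn D) (v u : Fin D → ℝ) :
    stdPair v u ≤ nrm v * dualNorm nrm u := by
  obtain ⟨c, hc, hlow⟩ := nrm_lower nrm
  have hbdd : BddAbove ((fun x => stdPair x u) '' {x | nrm x ≤ 1}) := by
    refine ⟨c⁻¹ * ∑ j : Fin D, |u j|, ?_⟩
    rintro _ ⟨w, hw, rfl⟩
    have hwn : ‖w‖ ≤ c⁻¹ := by
      have h1 : c * ‖w‖ ≤ 1 := (hlow w).trans hw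
      calc ‖w‖ = c⁻¹ * (c * ‖w‖) := by field_simp
        _ ≤ c⁻¹ * 1 := mul_le_mul_of_nonneg_left h1 (inv_nonneg.2 hc.le)
        _ = c⁻¹ := mul_one _
    calc stdPair w u ≤ ∑ j : Fin D, |w j| * |u j| := by
          apply Finset.sum_le_sum; intro j _
          calc w j * u j ≤ |w j * u j| := le_abs_self _
            _ = |w j| * |u j| := abs_mul _ _
      _ ≤ ∑ j : Fin D, c⁻¹ * |u j| := by
          apply Finset.sum_le_sum; intro j _
          apply mul_le_mul_of_nonneg_right _ (abs_nonneg _)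
          calc |w j| ≤ ‖w‖ := by simpa using norm_le_pi_norm w j
            _ ≤ c⁻¹ := hwn
      _ = c⁻¹ * ∑ j : Fin D, |u j| := by rw [Finset.mul_sum]
  by_cases hv : nrm v = 0
  · have : v = 0 := nrm.eq_zero' v hv
    simp [this, stdPair, nrm_zero]
  · have hvp : 0 < nrm v := lt_of_le_of_ne (nrm_nonneg nrm v) (Ne.symm hv)
    have hmem : ((nrm v)⁻¹ • v) ∈ {x | nrm x ≤ 1} := by
      simp only [Set.mem_setOf_eq, nrm.smul', abs_of_nonneg (inv_nonneg.2 hvp.le)]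
      rw [inv_mul_cancel₀ hv]
    have hle : stdPair ((nrm v)⁻¹ • v) u ≤ dualNorm nrm u :=
      le_csSup hbdd ⟨_, hmem, rfl⟩
    have heq : stdPair ((nrm v)⁻¹ • v) u = (nrm v)⁻¹ * stdPair v u := by
      rw [stdPair_comm, stdPair_smul_right, stdPair_comm u v]
    rw [heq] at hle
    calc stdPair v u = nrm v * ((nrm v)⁻¹ * stdPair v u) := by field_simp
      _ ≤ nrm v * dualNorm nrm u := mul_le_mul_of_nonneg_left hle hvp.le

/-- **One-step descent inequality for the Fenchel coupling.**
Let `ψ` be a `K`-strongly convex regularizer on a compact convex subset `Z` of the normed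
Euclidean space `(ℝ^D, ‖·‖)`, with induced mirror map `Φ` and Fenchel coupling `F`.
Then for every `p ∈ Z` and all `y, y′ ∈ ℝ^D`:
`F(p, y′) ≤ F(p, y) + ⟨Φ(y) − p, y′ − y⟩ + (1/(2K)) ‖y′ − y‖_*²`. -/
theorem fenchel_coupling_upper_bound {D : ℕ} (nrm : NormOn D) (Z : Set (Fin D → ℝ))
    (hZne : Z.Nonempty) (hZcomp : IsCompact Z) (hZconv : Convex ℝ Z)
    (K : ℝ) (hK : 0 < K)
    (ψ : (Fin D → ℝ) → ℝ) (hψcont : ContinuousOn ψ Z)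
    (hψsc : ∀ x ∈ Z, ∀ y ∈ Z, ∀ t ∈ Set.Icc (0 : ℝ) 1,
      ψ (t • x + (1 - t) • y) ≤
        t * ψ x + (1 - t) * ψ y - K / 2 * t * (1 - t) * (nrm (x - y)) ^ 2)
    (Φ : (Fin D → ℝ) → (Fin D → ℝ))
    (hΦmem : ∀ y, Φ y ∈ Z)
    (hΦmax : ∀ y, ∀ x ∈ Z, stdPair y x - ψ x ≤ stdPair y (Φ y) - ψ (Φ y)) :
    ∀ p ∈ Z, ∀ y y',
      fenchelCoupling Z ψ p y' ≤
        fenchelCoupling Z ψ p y + stdPair (Φ y - p) (y' - y) +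
          1 / (2 * K) * (dualNorm nrm (y' - y)) ^ 2 := by
  have hconj : ∀ z, conjFn Z ψ z = stdPair z (Φ z) - ψ (Φ z) := by
    intro z
    apply IsGreatest.csSup_eq
    constructor
    · exact ⟨Φ z, hΦmem z, by rw [stdPair_comm]⟩
    · rintro _ ⟨w, hw, rfl⟩
      dsimp only
      rw [stdPair_comm w z]
      exact hΦmax z w hw
  intro p hp y y'
  set x := Φ y with hx
  set x' := Φ y' with hx'
  set n := nrm (x' - x) with hn
  set d := dualNorm nrm (y' - y) with hd
  -- key strong-convexity inequality
  have hstep : ∀ t ∈ Set.Ioc (0:ℝ) 1,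
      stdPair y x' - stdPair y x + ψ x - ψ x' + K / 2 * (1 - t) * n ^ 2 ≤ 0 := by
    intro t ht
    have hmem : t • x' + (1 - t) • x ∈ Z :=
      hZconv (hΦmem y') (hΦmem y) ht.1.le (by linarith [ht.2]) (by ring)
    have h1 := hψsc x' (hΦmem y') x (hΦmem y) t ⟨ht.1.le, ht.2⟩
    have h2 := hΦmax y _ hmem
    have h3 : stdPair y (t • x' + (1 - t) • x)
        = t * stdPair y x' + (1 - t) * stdPair y x := by
      rw [stdPair_add_right, stdPair_smul_right, stdPair_smul_right]
    rw [h3] at h2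
    have h4 : t * (stdPair y x' - stdPair y x + ψ x - ψ x'
        + K / 2 * (1 - t) * n ^ 2) ≤ 0 := by nlinarith [h1, h2]
    nlinarith [h4, ht.1]
  have hkey : stdPair y x' - stdPair y x + ψ x - ψ x' + K / 2 * n ^ 2 ≤ 0 := by
    have htend : Filter.Tendsto
        (fun t : ℝ => stdPair y x' - stdPair y x + ψ x - ψ x' + K / 2 * (1 - t) * n ^ 2)
        (nhdsWithin 0 (Set.Ioi 0))
        (nhds (stdPair y x' - stdPair y x + ψ x - ψ x' + K / 2 * (1 - 0) * n ^ 2)) := by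
      apply Filter.Tendsto.mono_left _ nhdsWithin_le_nhds
      exact (Continuous.tendsto (by continuity) 0)
    have hev : ∀ᶠ t in nhdsWithin (0:ℝ) (Set.Ioi 0),
        stdPair y x' - stdPair y x + ψ x - ψ x' + K / 2 * (1 - t) * n ^ 2 ≤ 0 := by
      filter_upwards [Ioc_mem_nhdsGT_of_mem (Set.mem_Ico.2 ⟨le_refl 0, one_pos⟩)] with t ht
      exact hstep t ht
    have := le_of_tendsto htend hev
    simpa using this
  have hCS : stdPair (x' - x) (y' - y) ≤ n * d := stdPair_le_dualNorm nrm _ _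
  have hAM : n * d - K / 2 * n ^ 2 ≤ 1 / (2 * K) * d ^ 2 := by
    have hq : 1 / (2 * K) * d ^ 2 - (n * d - K / 2 * n ^ 2)
        = 1 / (2 * K) * (d - K * n) ^ 2 := by
      field_simp
      ring
    nlinarith [mul_nonneg (le_of_lt (by positivity : (0:ℝ) < 1 / (2 * K)))
      (sq_nonneg (d - K * n)), hq]
  -- expand everything
  have e1 : stdPair (x' - x) (y' - y)
      = stdPair x' y' - stdPair x' y - stdPair x y' + stdPair x y := by
    rw [stdPair_sub_left, stdPair_sub_right, stdPair_sub_right]; ring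
  have e2 : stdPair (x - p) (y' - y)
      = stdPair x y' - stdPair x y - stdPair p y' + stdPair p y := by
    rw [stdPair_sub_left, stdPair_sub_right, stdPair_sub_right]; ring
  have c1 : stdPair y x' = stdPair x' y := stdPair_comm _ _
  have c2 : stdPair y x = stdPair x y := stdPair_comm _ _
  have c3 : stdPair y' x' = stdPair x' y' := stdPair_comm _ _
  have c4 : stdPair y' p = stdPair p y' := stdPair_comm _ _
  have c5 : stdPair y p = stdPair p y := stdPair_comm _ _
  rw [fenchelCoupling, fenchelCoupling, hconj y, hconj y', ← hx, ← hx']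
  rw [stdPair_comm y' (Φ y'), ← hx'] at *
  linarith [hkey, hCS, hAM, e1, e2, c1, c2, c3, c4, c5]
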